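/- arXiv:2404.10489 — 3 statements merged into one kernel-verified Lean document; each statement's English description precedes it below -/
import Mathlib

section
/- For all real r ≥ 0 and x ≥ 0 there holds ∫₀^∞ ω e^{−ω²/2} J₀(ωr) J₀(ωx) dω = exp(−(r−x)²/2) · e^{−rx} I₀(rx) = exp(−(r²+x²)/2) · I₀(rx). -/
open MeasureTheory

/-- Bessel function of the first kind of order 0: `J₀(x) = (1/π)∫₀^π cos(x sin φ) dφ`. -/
noncomputable def J0 (x : ℝ) : ℝ :=
  (1 / Real.pi) * ∫ φ in (0 : ℝ)..Real.pi, Real.cos (x * Real.sin φ)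

/-- Modified Bessel function of the first kind of order 0: `I₀(z) = (1/π)∫₀^π e^{z cos φ} dφ`. -/
noncomputable def besselI0 (z : ℝ) : ℝ :=
  (1 / Real.pi) * ∫ φ in (0 : ℝ)..Real.pi, Real.exp (z * Real.cos φ)

open Real

lemma gauss_bound_aux (s : ℝ) (c : ℝ) (hc : |c| ≤ 1) : ‖Real.exp (-s^2/2) * c‖ ≤ Real.exp (-(1/2)*s^2) := by
  rw [norm_mul, Real.norm_eq_abs, abs_of_pos (Real.exp_pos _), Real.norm_eq_abs]
  calc Real.exp (-s^2/2) * |c| ≤ Real.exp (-s^2/2) * 1 := by gcongr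
    _ = Real.exp (-(1/2)*s^2) := by rw [mul_one]; ring_nf

lemma int_gauss_cos (p : ℝ) : Integrable (fun s : ℝ => Real.exp (-s^2/2) * Real.cos (p*s)) := by
  apply (integrable_exp_neg_mul_sq (by norm_num : (0:ℝ) < 1/2)).mono'
  · exact ((Real.continuous_exp.comp (by continuity)).mul (Real.continuous_cos.comp (by continuity))).aestronglyMeasurable
  · filter_upwards with s; exact gauss_bound_aux s _ (abs_cos_le_one _)

lemma int_gauss_sin (p : ℝ) : Integrable (fun s : ℝ => Real.exp (-s^2/2) * Real.sin (p*s)) := by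
  apply (integrable_exp_neg_mul_sq (by norm_num : (0:ℝ) < 1/2)).mono'
  · exact ((Real.continuous_exp.comp (by continuity)).mul (Real.continuous_sin.comp (by continuity))).aestronglyMeasurable
  · filter_upwards with s; exact gauss_bound_aux s _ (abs_sin_le_one _)

lemma gauss_sin (p : ℝ) : ∫ s : ℝ, Real.exp (-s^2/2) * Real.sin (p*s) = 0 := by
  have h := integral_neg_eq_self (fun s : ℝ => Real.exp (-s^2/2) * Real.sin (p*s)) volume
  simp only [neg_sq, mul_neg, Real.sin_neg] at h
  rw [integral_neg] at h
  linarith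

lemma gauss_cos (p : ℝ) : ∫ s : ℝ, Real.exp (-s^2/2) * Real.cos (p*s) = Real.sqrt (2*π) * Real.exp (-p^2/2) := by
  have hb : (0:ℝ) < (1/2 : ℂ).re := by norm_num
  have key := fourierIntegral_gaussian (b := 1/2) hb (p : ℂ)
  have hint : Integrable (fun x : ℝ => Complex.exp (Complex.I*p*x) * Complex.exp (-(1/2)*x^2)) := by
    refine (integrable_cexp_quadratic (b := 1/2) hb (Complex.I*p) 0).congr ?_
    filter_upwards with s
    rw [← Complex.exp_add]
    ring_nf
  have hre := integral_re hint
  have pointwise : ∀ x : ℝ, (Complex.exp (Complex.I*p*x) * Complex.exp (-(1/2)*x^2)).re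
      = Real.exp (-x^2/2) * Real.cos (p*x) := by
    intro s
    rw [show Complex.I * p * s = ((p*s : ℝ) : ℂ) * Complex.I by push_cast; ring, Complex.exp_mul_I]
    rw [show (-(1/2) * (s:ℂ) ^ 2) = ((-s^2/2 : ℝ) : ℂ) by push_cast; ring, ← Complex.ofReal_exp,
      ← Complex.ofReal_cos, ← Complex.ofReal_sin]
    rw [add_mul]
    simp only [Complex.add_re, Complex.mul_re, Complex.ofReal_re,
      Complex.ofReal_im, Complex.I_re, Complex.I_im]
    ring
  have rhs_eq : (((π : ℂ) / (1/2)) ^ (1/2 : ℂ) * Complex.exp (-(p:ℂ)^2 / (4 * (1/2)))).re =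
      Real.sqrt (2*π) * Real.exp (-p^2/2) := by
    rw [show ((π : ℂ) / (1/2)) = ((2*π : ℝ) : ℂ) by push_cast; ring,
      show (-(p:ℂ)^2 / (4 * (1/2))) = ((-p^2/2 : ℝ) : ℂ) by push_cast; ring,
      show (1/2 : ℂ) = ((1/2 : ℝ) : ℂ) by push_cast; ring,
      ← Complex.ofReal_cpow (by positivity), ← Complex.ofReal_exp, ← Complex.ofReal_mul,
      Complex.ofReal_re]
    rw [← Real.sqrt_eq_rpow]
  calc ∫ s : ℝ, Real.exp (-s^2/2) * Real.cos (p*s)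
      = ∫ x : ℝ, (Complex.exp (Complex.I*p*x) * Complex.exp (-(1/2)*x^2)).re := by
        congr 1; funext s; rw [pointwise]
    _ = (∫ x : ℝ, Complex.exp (Complex.I*p*x) * Complex.exp (-(1/2)*x^2)).re := hre
    _ = Real.sqrt (2*π) * Real.exp (-p^2/2) := by rw [key]; exact rhs_eq

lemma cont_gausscos2 (p q : ℝ) : Continuous (fun u : ℝ × ℝ => Real.exp (-(u.1^2+u.2^2)/2) * Real.cos (p*u.1 + q*u.2)) := by
  apply Continuous.mul
  · exact Real.continuous_exp.comp (by continuity)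
  · exact Real.continuous_cos.comp (by continuity)

lemma int_gauss2_bound : Integrable (fun u : ℝ × ℝ => Real.exp (-(1/2)*u.1^2) * Real.exp (-(1/2)*u.2^2)) := by
  rw [show (volume : Measure (ℝ × ℝ)) = volume.prod volume from Measure.volume_eq_prod ℝ ℝ]
  exact (integrable_exp_neg_mul_sq (by norm_num : (0:ℝ) < 1/2)).mul_prod
    (integrable_exp_neg_mul_sq (by norm_num : (0:ℝ) < 1/2))

lemma gauss2_exp_split (a b : ℝ) : Real.exp (-(a^2+b^2)/2) = Real.exp (-(1/2)*a^2) * Real.exp (-(1/2)*b^2) := by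
  rw [← Real.exp_add]; ring_nf

lemma int_gauss2 (p q : ℝ) : Integrable (fun u : ℝ × ℝ => Real.exp (-(u.1^2+u.2^2)/2) * Real.cos (p*u.1 + q*u.2)) := by
  apply int_gauss2_bound.mono' (cont_gausscos2 p q).aestronglyMeasurable
  filter_upwards with u
  rw [norm_mul, Real.norm_eq_abs, Real.norm_eq_abs, abs_of_pos (Real.exp_pos _), gauss2_exp_split]
  calc Real.exp (-(1/2)*u.1^2) * Real.exp (-(1/2)*u.2^2) * |Real.cos (p*u.1 + q*u.2)|
      ≤ Real.exp (-(1/2)*u.1^2) * Real.exp (-(1/2)*u.2^2) * 1 := by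
        gcongr; exact abs_cos_le_one _
    _ = _ := by rw [mul_one]

lemma gauss2 (p q : ℝ) : ∫ u : ℝ × ℝ, Real.exp (-(u.1^2+u.2^2)/2) * Real.cos (p*u.1 + q*u.2)
    = 2*π * Real.exp (-(p^2+q^2)/2) := by
  have h := int_gauss2 p q
  rw [show (volume : Measure (ℝ × ℝ)) = volume.prod volume from Measure.volume_eq_prod ℝ ℝ] at h ⊢
  rw [MeasureTheory.integral_prod _ h]
  have inner : ∀ a : ℝ, (∫ b : ℝ, Real.exp (-(a^2+b^2)/2) * Real.cos (p*a + q*b))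
      = (Real.exp (-a^2/2) * Real.cos (p*a)) * (Real.sqrt (2*π) * Real.exp (-q^2/2)) := by
    intro a
    have eq1 : (fun b : ℝ => Real.exp (-(a^2+b^2)/2) * Real.cos (p*a + q*b))
        = fun b : ℝ => (Real.exp (-a^2/2) * Real.cos (p*a)) * (Real.exp (-b^2/2) * Real.cos (q*b))
          - (Real.exp (-a^2/2) * Real.sin (p*a)) * (Real.exp (-b^2/2) * Real.sin (q*b)) := by
      funext b
      rw [Real.cos_add, show Real.exp (-(a^2+b^2)/2) = Real.exp (-a^2/2) * Real.exp (-b^2/2) by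
        rw [← Real.exp_add]; ring_nf]
      ring
    rw [eq1, integral_sub ((int_gauss_cos q).const_mul _) ((int_gauss_sin q).const_mul _),
      MeasureTheory.integral_const_mul, MeasureTheory.integral_const_mul, gauss_cos, gauss_sin, mul_zero, sub_zero]
  simp_rw [inner]
  rw [MeasureTheory.integral_mul_const, gauss_cos]
  calc Real.sqrt (2*π) * Real.exp (-p^2/2) * (Real.sqrt (2*π) * Real.exp (-q^2/2))
      = (Real.sqrt (2*π) * Real.sqrt (2*π)) * (Real.exp (-p^2/2) * Real.exp (-q^2/2)) := by ring
    _ = 2*π * Real.exp (-(p^2+q^2)/2) := by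
        rw [Real.mul_self_sqrt (by positivity), ← Real.exp_add,
          show -p^2/2 + -q^2/2 = -(p^2+q^2)/2 by ring]

open intervalIntegral in
lemma half_even_cos (c : ℝ) (f : ℝ → ℝ) (hf : Continuous f) (hsymm : ∀ θ, f (-θ) = f θ) (b : ℝ) :
    ∫ θ in (-b)..b, f θ = 2 * ∫ θ in (0:ℝ)..b, f θ := by
  have h1 : ∫ θ in (-b)..(0:ℝ), f θ = ∫ θ in (0:ℝ)..b, f θ := by
    have := intervalIntegral.integral_comp_neg (a := 0) (b := b) f
    rw [neg_zero] at this
    rw [← this]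
    congr 1; funext θ; rw [hsymm]
  rw [← intervalIntegral.integral_add_adjacent_intervals (μ := volume) (a := -b) (b := 0) (c := b)
    (hf.intervalIntegrable _ _) (hf.intervalIntegrable _ _), h1, two_mul]

lemma cos_cos_cont (c : ℝ) : Continuous (fun θ : ℝ => Real.cos (c * Real.cos θ)) :=
  Real.continuous_cos.comp (continuous_const.mul Real.continuous_cos)

lemma cos_sin_cont (c : ℝ) : Continuous (fun θ : ℝ => Real.cos (c * Real.sin θ)) :=
  Real.continuous_cos.comp (continuous_const.mul Real.continuous_sin)

lemma halfJ0 (c : ℝ) : ∫ θ in (0:ℝ)..π, Real.cos (c * Real.cos θ) = π * J0 c := by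
  have ha : ∫ θ in (0:ℝ)..π, Real.cos (c * Real.cos θ)
      = ∫ φ in (-(π/2))..(π/2), Real.cos (c * Real.sin φ) := by
    have := intervalIntegral.integral_comp_add_right (a := -(π/2)) (b := π/2)
      (fun θ : ℝ => Real.cos (c * Real.cos θ)) (π/2)
    norm_num at this
    rw [← this]
    congr 1; funext φ
    rw [show φ + π/2 = φ + π/2 by rfl, Real.cos_add_pi_div_two, mul_neg, Real.cos_neg]
  have hb : ∫ φ in (-(π/2))..(π/2), Real.cos (c * Real.sin φ)
      = 2 * ∫ φ in (0:ℝ)..(π/2), Real.cos (c * Real.sin φ) := by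
    apply half_even_cos c _ (cos_sin_cont c)
    intro θ; rw [Real.sin_neg, mul_neg, Real.cos_neg]
  have hc : ∫ θ in (0:ℝ)..π, Real.cos (c * Real.sin θ)
      = 2 * ∫ φ in (0:ℝ)..(π/2), Real.cos (c * Real.sin φ) := by
    have hsplit := intervalIntegral.integral_add_adjacent_intervals (μ := volume) (a := 0) (b := π/2) (c := π)
      ((cos_sin_cont c).intervalIntegrable _ _) ((cos_sin_cont c).intervalIntegrable _ _)
    have hrefl : ∫ θ in (π/2)..π, Real.cos (c * Real.sin θ)
        = ∫ φ in (0:ℝ)..(π/2), Real.cos (c * Real.sin φ) := by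
      have := intervalIntegral.integral_comp_sub_left (a := 0) (b := π/2)
        (fun θ : ℝ => Real.cos (c * Real.sin θ)) π
      norm_num at this
      rw [show π - π/2 = π/2 by ring] at this
      exact this.symm
    rw [← hsplit, hrefl]; ring
  rw [ha, hb, ← hc]
  simp only [J0]
  rw [← mul_assoc]
  rw [mul_one_div, div_self Real.pi_ne_zero, one_mul]

lemma J0_full (c β : ℝ) : ∫ θ in (-π)..π, Real.cos (c * Real.cos (θ - β)) = 2 * π * J0 c := by
  have hper : Function.Periodic (fun θ : ℝ => Real.cos (c * Real.cos θ)) (2*π) := by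
    intro θ; simp [Real.cos_add_two_pi]
  have hshift := intervalIntegral.integral_comp_sub_right (a := -π) (b := π)
    (fun θ : ℝ => Real.cos (c * Real.cos θ)) β
  rw [hshift]
  have := hper.intervalIntegral_add_eq (-π - β) (-π)
  rw [show -π - β + 2*π = π - β by ring, show -π + 2*π = π by ring] at this
  rw [this, half_even_cos c _ (cos_cos_cont c) (fun θ => by rw [Real.cos_neg]) π, halfJ0]
  ring

lemma exp_cos_cont (c : ℝ) : Continuous (fun θ : ℝ => Real.exp (c * Real.cos θ)) :=
  Real.continuous_exp.comp (continuous_const.mul Real.continuous_cos)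

lemma halfI0 (c : ℝ) : ∫ θ in (0:ℝ)..π, Real.exp (c * Real.cos θ) = π * besselI0 c := by
  simp only [besselI0]
  rw [← mul_assoc, mul_one_div, div_self Real.pi_ne_zero, one_mul]

lemma halfI0_neg (c : ℝ) : ∫ θ in (0:ℝ)..π, Real.exp (-(c * Real.cos θ)) = π * besselI0 c := by
  have h := intervalIntegral.integral_comp_sub_left (a := 0) (b := π)
    (fun θ : ℝ => Real.exp (c * Real.cos θ)) π
  rw [show π - π = (0:ℝ) by ring, show π - 0 = π by ring] at h
  rw [← halfI0 c, ← h]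
  congr 1; funext θ
  rw [Real.cos_pi_sub, mul_neg]

lemma I0_full (c : ℝ) : ∫ θ in (-π)..π, Real.exp (c * Real.cos θ) = 2 * π * besselI0 c := by
  rw [half_even_cos c _ (exp_cos_cont c) (fun θ => by rw [Real.cos_neg]) π, halfI0]; ring

lemma I0_full_neg (c : ℝ) : ∫ θ in (-π)..π, Real.exp (-(c * Real.cos θ)) = 2 * π * besselI0 c := by
  have hcont : Continuous (fun θ : ℝ => Real.exp (-(c * Real.cos θ))) :=
    Real.continuous_exp.comp (continuous_const.mul Real.continuous_cos).neg
  rw [half_even_cos c _ hcont (fun θ => by rw [Real.cos_neg]) π, halfI0_neg]; ring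

lemma J0_cont : Continuous J0 := by
  have h : Continuous fun x : ℝ => ∫ φ in (0:ℝ)..π, Real.cos (x * Real.sin φ) := by
    apply intervalIntegral.continuous_parametric_intervalIntegral_of_continuous' (μ := volume)
    exact Real.continuous_cos.comp ((continuous_fst).mul (Real.continuous_sin.comp continuous_snd))
  exact (continuous_const.mul h : Continuous fun x : ℝ => (1 / Real.pi) * ∫ φ in (0:ℝ)..π, Real.cos (x * Real.sin φ))

lemma J0_abs_le_one (y : ℝ) : |J0 y| ≤ 1 := by
  have h : ‖∫ φ in (0:ℝ)..π, Real.cos (y * Real.sin φ)‖ ≤ 1 * |π - 0| := by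
    apply intervalIntegral.norm_integral_le_of_norm_le_const
    intro t _
    rw [Real.norm_eq_abs]
    exact Real.abs_cos_le_one _
  rw [Real.norm_eq_abs] at h
  rw [J0, abs_mul, abs_of_pos (by positivity : (0:ℝ) < 1/π)]
  calc (1/π) * |∫ φ in (0:ℝ)..π, Real.cos (y * Real.sin φ)| ≤ (1/π) * (1 * |π - 0|) := by
        gcongr
    _ = 1 := by rw [sub_zero, abs_of_pos Real.pi_pos]; field_simp

lemma rho_exp_integrable : Integrable (fun s : ℝ => |s| * Real.exp (-(1/2)*s^2)) := by
  have h := (integrable_mul_exp_neg_mul_sq (by norm_num : (0:ℝ) < 1/2)).abs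
  apply h.congr
  filter_upwards with s
  rw [abs_mul, abs_of_pos (Real.exp_pos _)]

lemma polarA (r x : ℝ) :
    ∫ u : ℝ × ℝ, Real.exp (-(u.1^2+u.2^2)/2) * J0 (x * Real.sqrt (u.1^2+u.2^2)) * Real.cos (r * u.1)
    = 2 * π * ∫ ω in Set.Ioi (0:ℝ), ω * Real.exp (-ω^2/2) * J0 (ω*r) * J0 (ω*x) := by
  set f : ℝ × ℝ → ℝ := fun u =>
    Real.exp (-(u.1^2+u.2^2)/2) * J0 (x * Real.sqrt (u.1^2+u.2^2)) * Real.cos (r * u.1) with hf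
  have hpolar := (integral_comp_polarCoord_symm f).symm
  rw [hpolar]
  have hcongr : ∫ p in polarCoord.target, p.1 • f (polarCoord.symm p)
      = ∫ p in Set.Ioi (0:ℝ) ×ˢ Set.Ioo (-π) π,
          p.1 * (Real.exp (-p.1^2/2) * J0 (x * p.1) * Real.cos (r * (p.1 * Real.cos p.2))) := by
    rw [polarCoord_target]
    apply setIntegral_congr_fun (measurableSet_Ioi.prod measurableSet_Ioo)
    intro p hp
    have hp1 : 0 < p.1 := hp.1
    have hsq : (p.1 * Real.cos p.2)^2 + (p.1 * Real.sin p.2)^2 = p.1^2 := by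
      have h := Real.sin_sq_add_cos_sq p.2
      nlinarith [h]
    rw [hf]
    simp only [polarCoord_symm_apply, smul_eq_mul]
    rw [hsq, Real.sqrt_sq hp1.le]
  rw [hcongr]
  have hmeas : Measure.restrict volume (Set.Ioi (0:ℝ) ×ˢ Set.Ioo (-π) π)
      = (volume.restrict (Set.Ioi (0:ℝ))).prod (volume.restrict (Set.Ioo (-π) π)) := by
    rw [show (volume : Measure (ℝ × ℝ)) = volume.prod volume from Measure.volume_eq_prod ℝ ℝ,
      Measure.prod_restrict]
  rw [hmeas]
  set g : ℝ × ℝ → ℝ := fun p =>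
    p.1 * (Real.exp (-p.1^2/2) * J0 (x * p.1) * Real.cos (r * (p.1 * Real.cos p.2))) with hg
  have hgcont : Continuous g := by
    apply continuous_fst.mul
    apply Continuous.mul
    · exact ((Real.continuous_exp.comp (by continuity)).mul
        (J0_cont.comp (continuous_const.mul continuous_fst)))
    · exact Real.continuous_cos.comp (continuous_const.mul (continuous_fst.mul
        (Real.continuous_cos.comp continuous_snd)))
  have hgint : Integrable g ((volume.restrict (Set.Ioi (0:ℝ))).prod
      (volume.restrict (Set.Ioo (-π) π))) := by
    have hbound : Integrable (fun p : ℝ × ℝ => (|p.1| * Real.exp (-(1/2)*p.1^2)) * 1)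
        ((volume.restrict (Set.Ioi (0:ℝ))).prod (volume.restrict (Set.Ioo (-π) π))) := by
      refine Integrable.mul_prod (f := fun s : ℝ => |s| * Real.exp (-(1/2)*s^2))
        (g := fun _ : ℝ => (1:ℝ)) (rho_exp_integrable.restrict) ?_
      rw [integrable_const_iff]
      right
      constructor
      rw [Measure.restrict_apply_univ]
      exact measure_Ioo_lt_top
    apply hbound.mono' hgcont.aestronglyMeasurable
    filter_upwards with p
    rw [hg]
    simp only [norm_mul, Real.norm_eq_abs, mul_one]
    rw [show -p.1^2/2 = -(1/2)*p.1^2 by ring]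
    have h1 : |Real.exp (-(1/2)*p.1^2)| = Real.exp (-(1/2)*p.1^2) := abs_of_pos (Real.exp_pos _)
    rw [h1]
    calc |p.1| * (Real.exp (-(1/2)*p.1^2) * |J0 (x*p.1)| * |Real.cos (r * (p.1 * Real.cos p.2))|)
        ≤ |p.1| * (Real.exp (-(1/2)*p.1^2) * 1 * 1) := by
          gcongr
          · exact J0_abs_le_one _
          · exact Real.abs_cos_le_one _
      _ = |p.1| * Real.exp (-(1/2)*p.1^2) := by ring
  rw [MeasureTheory.integral_prod _ hgint]
  have hinner : ∀ s : ℝ, (∫ t in Set.Ioo (-π) π, g (s, t))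
      = s * Real.exp (-s^2/2) * J0 (x*s) * (2 * π * J0 (r*s)) := by
    intro s
    rw [hg]
    simp only
    have hpull : ∫ t in Set.Ioo (-π) π,
        s * (Real.exp (-s^2/2) * J0 (x*s) * Real.cos (r * (s * Real.cos t)))
        = (s * (Real.exp (-s^2/2) * J0 (x*s))) * ∫ t in Set.Ioo (-π) π, Real.cos ((r*s) * Real.cos t) := by
      rw [← MeasureTheory.integral_const_mul]
      congr 1; funext t; ring_nf
    rw [hpull]
    have hIoo : ∫ t in Set.Ioo (-π) π, Real.cos ((r*s) * Real.cos t)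
        = ∫ t in (-π)..π, Real.cos ((r*s) * Real.cos t) := by
      rw [intervalIntegral.integral_of_le (by linarith [Real.pi_pos] : -π ≤ π),
        MeasureTheory.integral_Ioc_eq_integral_Ioo]
    rw [hIoo]
    have hJ := J0_full (r*s) 0
    simp only [sub_zero] at hJ
    rw [hJ]
    ring
  simp_rw [hinner]
  rw [← MeasureTheory.integral_const_mul]
  congr 1; funext ω
  rw [show J0 (ω*r) = J0 (r*ω) by rw [mul_comm], show J0 (ω*x) = J0 (x*ω) by rw [mul_comm]]
  ring

lemma J0_rep (x : ℝ) (u : ℝ × ℝ) : J0 (x * Real.sqrt (u.1^2 + u.2^2))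
    = (1/(2*π)) * ∫ θ in Set.Ioo (-π) π, Real.cos (x*(u.1*Real.cos θ + u.2*Real.sin θ)) := by
  set z : ℂ := ⟨u.1, u.2⟩ with hz
  have habs : ‖z‖ = Real.sqrt (u.1^2 + u.2^2) := by
    rw [Complex.norm_def, Complex.normSq_mk]; ring_nf
  have hre : ‖z‖ * Real.cos z.arg = u.1 := Complex.norm_mul_cos_arg z
  have him : ‖z‖ * Real.sin z.arg = u.2 := Complex.norm_mul_sin_arg z
  have hpt : ∀ θ : ℝ, Real.cos (x*(u.1*Real.cos θ + u.2*Real.sin θ))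
      = Real.cos ((x * Real.sqrt (u.1^2+u.2^2)) * Real.cos (θ - z.arg)) := by
    intro θ
    rw [Real.cos_sub, ← habs, ← hre, ← him]
    congr 1
    ring
  have hIoo : ∫ θ in Set.Ioo (-π) π, Real.cos (x*(u.1*Real.cos θ + u.2*Real.sin θ))
      = ∫ θ in (-π)..π, Real.cos ((x * Real.sqrt (u.1^2+u.2^2)) * Real.cos (θ - z.arg)) := by
    rw [intervalIntegral.integral_of_le (by linarith [Real.pi_pos] : -π ≤ π),
      MeasureTheory.integral_Ioc_eq_integral_Ioo]
    apply setIntegral_congr_fun measurableSet_Ioo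
    intro θ _
    exact hpt θ
  rw [hIoo, J0_full]
  rw [← mul_assoc, show (1/(2*π)) * (2*π) = 1 by field_simp, one_mul]

lemma int_theta_const : IsFiniteMeasure (volume.restrict (Set.Ioo (-π) π)) := by
  constructor
  rw [Measure.restrict_apply_univ]
  exact measure_Ioo_lt_top

lemma polarB (r x : ℝ) :
    ∫ u : ℝ × ℝ, Real.exp (-(u.1^2+u.2^2)/2) * J0 (x * Real.sqrt (u.1^2+u.2^2)) * Real.cos (r * u.1)
    = 2 * π * (Real.exp (-(r^2+x^2)/2) * besselI0 (r*x)) := by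
  set ν : Measure ℝ := volume.restrict (Set.Ioo (-π) π) with hν
  set h : (ℝ × ℝ) → ℝ → ℝ := fun u θ =>
    Real.exp (-(u.1^2+u.2^2)/2) * Real.cos (r*u.1) * Real.cos (x*(u.1*Real.cos θ + u.2*Real.sin θ))
    with hh
  have huncont : Continuous (Function.uncurry h) := by
    have hrfl : Function.uncurry h = fun z : (ℝ × ℝ) × ℝ =>
        Real.exp (-(z.1.1^2+z.1.2^2)/2) * Real.cos (r*z.1.1)
          * Real.cos (x*(z.1.1*Real.cos z.2 + z.1.2*Real.sin z.2)) := rfl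
    rw [hrfl]
    fun_prop
  have step1 : ∫ u : ℝ × ℝ,
      Real.exp (-(u.1^2+u.2^2)/2) * J0 (x * Real.sqrt (u.1^2+u.2^2)) * Real.cos (r * u.1)
      = (1/(2*π)) * ∫ u : ℝ × ℝ, ∫ θ, h u θ ∂ν := by
    rw [← MeasureTheory.integral_const_mul]
    congr 1; funext u
    rw [show (∫ θ, h u θ ∂ν) = (Real.exp (-(u.1^2+u.2^2)/2) * Real.cos (r*u.1))
        * ∫ θ in Set.Ioo (-π) π, Real.cos (x*(u.1*Real.cos θ + u.2*Real.sin θ)) from by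
      rw [hν]; exact MeasureTheory.integral_const_mul _ _]
    rw [J0_rep x u]
    ring
  rw [step1]
  have hint : Integrable (Function.uncurry h) (volume.prod ν) := by
    have hbound : Integrable (fun z : (ℝ × ℝ) × ℝ =>
        (Real.exp (-(1/2)*z.1.1^2) * Real.exp (-(1/2)*z.1.2^2)) * 1) (volume.prod ν) := by
      haveI := int_theta_const
      refine Integrable.mul_prod (f := fun u : ℝ × ℝ => Real.exp (-(1/2)*u.1^2) * Real.exp (-(1/2)*u.2^2))
        (g := fun _ : ℝ => (1:ℝ)) int_gauss2_bound (integrable_const 1)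
    apply hbound.mono' huncont.aestronglyMeasurable
    filter_upwards with z
    rw [Function.uncurry, hh]
    simp only [norm_mul, Real.norm_eq_abs, mul_one]
    rw [abs_of_pos (Real.exp_pos _), gauss2_exp_split]
    calc Real.exp (-(1/2)*z.1.1^2) * Real.exp (-(1/2)*z.1.2^2) * |Real.cos (r*z.1.1)|
          * |Real.cos (x*(z.1.1*Real.cos z.2 + z.1.2*Real.sin z.2))|
        ≤ Real.exp (-(1/2)*z.1.1^2) * Real.exp (-(1/2)*z.1.2^2) * 1 * 1 := by
          gcongr
          · exact Real.abs_cos_le_one _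
          · exact Real.abs_cos_le_one _
      _ = Real.exp (-(1/2)*z.1.1^2) * Real.exp (-(1/2)*z.1.2^2) := by ring
  rw [MeasureTheory.integral_integral_swap hint]
  have hinner : ∀ θ : ℝ, (∫ u : ℝ × ℝ, h u θ)
      = π * (Real.exp (-(r^2+x^2)/2) * (Real.exp (-((r*x) * Real.cos θ)) + Real.exp ((r*x) * Real.cos θ))) := by
    intro θ
    have hsplit : ∀ u : ℝ × ℝ, h u θ = (1/2) *
        ((Real.exp (-(u.1^2+u.2^2)/2) * Real.cos ((r + x*Real.cos θ)*u.1 + (x*Real.sin θ)*u.2))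
        + (Real.exp (-(u.1^2+u.2^2)/2) * Real.cos ((r - x*Real.cos θ)*u.1 + (-(x*Real.sin θ))*u.2))) := by
      intro u
      rw [hh]
      simp only
      rw [show (r + x*Real.cos θ)*u.1 + (x*Real.sin θ)*u.2
          = (r*u.1) + (x*(u.1*Real.cos θ + u.2*Real.sin θ)) by ring,
        show (r - x*Real.cos θ)*u.1 + (-(x*Real.sin θ))*u.2
          = (r*u.1) - (x*(u.1*Real.cos θ + u.2*Real.sin θ)) by ring,
        Real.cos_add, Real.cos_sub]
      ring
    simp_rw [hsplit]
    rw [MeasureTheory.integral_const_mul, integral_add (int_gauss2 _ _) (int_gauss2 _ _),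
      gauss2, gauss2]
    have e1 : (r + x*Real.cos θ)^2 + (x*Real.sin θ)^2 = (r^2+x^2) + 2*(r*x)*Real.cos θ := by
      have := Real.sin_sq_add_cos_sq θ
      nlinarith [this]
    have e2 : (r - x*Real.cos θ)^2 + (-(x*Real.sin θ))^2 = (r^2+x^2) - 2*(r*x)*Real.cos θ := by
      have := Real.sin_sq_add_cos_sq θ
      nlinarith [this]
    rw [e1, e2,
      show -((r^2+x^2) + 2*(r*x)*Real.cos θ)/2 = -(r^2+x^2)/2 + -((r*x)*Real.cos θ) by ring,
      show -((r^2+x^2) - 2*(r*x)*Real.cos θ)/2 = -(r^2+x^2)/2 + ((r*x)*Real.cos θ) by ring,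
      Real.exp_add, Real.exp_add]
    ring
  simp_rw [hinner]
  rw [MeasureTheory.integral_const_mul, MeasureTheory.integral_const_mul, hν]
  have hsum : ∫ θ in Set.Ioo (-π) π,
      (Real.exp (-((r*x) * Real.cos θ)) + Real.exp ((r*x) * Real.cos θ))
      = 2*π*besselI0 (r*x) + 2*π*besselI0 (r*x) := by
    have hi1 : IntegrableOn (fun θ : ℝ => Real.exp (-((r*x) * Real.cos θ))) (Set.Ioo (-π) π) := by
      have hcont : Continuous (fun θ : ℝ => Real.exp (-((r*x) * Real.cos θ))) :=
        Real.continuous_exp.comp (continuous_const.mul Real.continuous_cos).neg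
      exact (hcont.integrableOn_Icc).mono_set Set.Ioo_subset_Icc_self
    have hi2 : IntegrableOn (fun θ : ℝ => Real.exp ((r*x) * Real.cos θ)) (Set.Ioo (-π) π) :=
      ((exp_cos_cont (r*x)).integrableOn_Icc).mono_set Set.Ioo_subset_Icc_self
    rw [integral_add hi1 hi2]
    have c1 : ∫ θ in Set.Ioo (-π) π, Real.exp (-((r*x) * Real.cos θ))
        = ∫ θ in (-π)..π, Real.exp (-((r*x) * Real.cos θ)) := by
      rw [intervalIntegral.integral_of_le (by linarith [Real.pi_pos] : -π ≤ π),
        MeasureTheory.integral_Ioc_eq_integral_Ioo]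
    have c2 : ∫ θ in Set.Ioo (-π) π, Real.exp ((r*x) * Real.cos θ)
        = ∫ θ in (-π)..π, Real.exp ((r*x) * Real.cos θ) := by
      rw [intervalIntegral.integral_of_le (by linarith [Real.pi_pos] : -π ≤ π),
        MeasureTheory.integral_Ioc_eq_integral_Ioo]
    rw [c1, c2, I0_full_neg, I0_full]
  rw [hsum]
  field_simp
  ring

theorem stmt_12 (r x : ℝ) (hr : 0 ≤ r) (hx : 0 ≤ x) :
    (∫ ω in Set.Ioi (0 : ℝ), ω * Real.exp (-ω ^ 2 / 2) * J0 (ω * r) * J0 (ω * x)) =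
        Real.exp (-(r - x) ^ 2 / 2) * (Real.exp (-(r * x)) * besselI0 (r * x)) ∧
      (∫ ω in Set.Ioi (0 : ℝ), ω * Real.exp (-ω ^ 2 / 2) * J0 (ω * r) * J0 (ω * x)) =
        Real.exp (-(r ^ 2 + x ^ 2) / 2) * besselI0 (r * x) := by
  have key : (∫ ω in Set.Ioi (0 : ℝ), ω * Real.exp (-ω ^ 2 / 2) * J0 (ω * r) * J0 (ω * x))
      = Real.exp (-(r^2+x^2)/2) * besselI0 (r*x) := by
    have h := (polarA r x).symm.trans (polarB r x)
    exact mul_left_cancel₀ (by positivity : (2*π : ℝ) ≠ 0) h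
  refine ⟨?_, key⟩
  rw [key, ← mul_assoc, ← Real.exp_add, show -(r-x)^2/2 + -(r*x) = -(r^2+x^2)/2 by ring]
end

section
/- For every real t and every real r > 0 there holds (1/√(2π)) ∫₀^∞ [exp(−(r−t+rξ)²/2) / √(ξ(ξ+2))] · (r−t+rξ)(1+ξ) dξ = (1/√(2π)) ∫₀^∞ [exp(−(r−t+rξ)²/2) / √(ξ(ξ+2))] · [ (r(1+ξ) − t)/(1+ξ) + 1/(r(1+ξ)²) ] dξ. -/
open MeasureTheory Real Set Filter Topology

private lemma stmt17_abs_mul_exp_le (x : ℝ) :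
    |x| * Real.exp (-x ^ 2 / 2) ≤ Real.exp (-x ^ 2 / 4) := by
  have h1 : |x| ≤ Real.exp (x ^ 2 / 4) := by
    have h := Real.add_one_le_exp (x ^ 2 / 4)
    nlinarith [abs_nonneg x, sq_abs x, sq_nonneg (|x| - 2)]
  calc |x| * Real.exp (-x ^ 2 / 2) ≤ Real.exp (x ^ 2 / 4) * Real.exp (-x ^ 2 / 2) :=
        mul_le_mul_of_nonneg_right h1 (Real.exp_nonneg _)
    _ = Real.exp (-x ^ 2 / 4) := by rw [← Real.exp_add]; ring_nf

private lemma stmt17_abs_mul_exp_le_one (x : ℝ) : |x| * Real.exp (-x ^ 2 / 2) ≤ 1 := by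
  refine (stmt17_abs_mul_exp_le x).trans ?_
  rw [show (1:ℝ) = Real.exp 0 from Real.exp_zero.symm]
  exact Real.exp_le_exp.2 (by nlinarith [sq_nonneg x])

private lemma stmt17_integrable_gauss (r s : ℝ) (hr : r ≠ 0) :
    Integrable (fun ξ : ℝ => Real.exp (-(s + r * ξ) ^ 2 / 4)) := by
  have h0 : Integrable (fun x : ℝ => Real.exp (-(1/4 : ℝ) * x ^ 2)) :=
    integrable_exp_neg_mul_sq (by norm_num)
  have h2 := (h0.comp_add_right s).comp_mul_left' hr
  have he : (fun ξ : ℝ => Real.exp (-(s + r * ξ) ^ 2 / 4)) =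
      fun x : ℝ => Real.exp (-(1/4 : ℝ) * (r * x + s) ^ 2) := by
    funext x; congr 1; ring
  rw [he]; exact h2

private lemma stmt17_integrable_inv_sqrt :
    IntegrableOn (fun x : ℝ => x ^ (-(1/2) : ℝ)) (Ioc 0 1) := by
  have h := intervalIntegral.intervalIntegrable_rpow' (r := -(1/2)) (by norm_num)
    (a := 0) (b := 1)
  rwa [intervalIntegrable_iff_integrableOn_Ioc_of_le zero_le_one] at h

set_option maxHeartbeats 1000000 in
theorem stmt_17 (t r : ℝ) (hr : 0 < r) :
    (1 / Real.sqrt (2 * Real.pi)) * (∫ ξ in Set.Ioi (0 : ℝ),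
        Real.exp (-(r - t + r * ξ) ^ 2 / 2) / Real.sqrt (ξ * (ξ + 2)) *
          ((r - t + r * ξ) * (1 + ξ))) =
      (1 / Real.sqrt (2 * Real.pi)) * ∫ ξ in Set.Ioi (0 : ℝ),
        Real.exp (-(r - t + r * ξ) ^ 2 / 2) / Real.sqrt (ξ * (ξ + 2)) *
          ((r * (1 + ξ) - t) / (1 + ξ) + 1 / (r * (1 + ξ) ^ 2)) := by
  congr 1
  set f : ℝ → ℝ := fun ξ => Real.exp (-(r - t + r * ξ) ^ 2 / 2) / Real.sqrt (ξ * (ξ + 2)) *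
      ((r - t + r * ξ) * (1 + ξ)) with hfdef
  set g : ℝ → ℝ := fun ξ => Real.exp (-(r - t + r * ξ) ^ 2 / 2) / Real.sqrt (ξ * (ξ + 2)) *
      ((r * (1 + ξ) - t) / (1 + ξ) + 1 / (r * (1 + ξ) ^ 2)) with hgdef
  set F : ℝ → ℝ := fun ξ =>
      Real.exp (-(r - t + r * ξ) ^ 2 / 2) * Real.sqrt (ξ * (ξ + 2)) / (1 + ξ) with hFdef
  -- continuity facts
  have hexp : Continuous fun ξ : ℝ => Real.exp (-(r - t + r * ξ) ^ 2 / 2) := by continuity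
  have hsq : Continuous fun ξ : ℝ => Real.sqrt (ξ * (ξ + 2)) := by continuity
  have hfc : ContinuousOn f (Ioi 0) := by
    apply ContinuousOn.mul
    · exact ContinuousOn.div hexp.continuousOn hsq.continuousOn
        (fun x hx => (Real.sqrt_pos.2 (by nlinarith [mem_Ioi.1 hx])).ne')
    · exact (by continuity : Continuous fun ξ : ℝ => (r - t + r * ξ) * (1 + ξ)).continuousOn
  have hgc : ContinuousOn g (Ioi 0) := by
    apply ContinuousOn.mul
    · exact ContinuousOn.div hexp.continuousOn hsq.continuousOn
        (fun x hx => (Real.sqrt_pos.2 (by nlinarith [mem_Ioi.1 hx])).ne')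
    · apply ContinuousOn.add
      · exact ContinuousOn.div
          (by continuity : Continuous fun ξ : ℝ => r * (1 + ξ) - t).continuousOn
          (by continuity : Continuous fun ξ : ℝ => 1 + ξ).continuousOn
          (fun x hx => by have := mem_Ioi.1 hx; positivity)
      · exact ContinuousOn.div continuousOn_const
          (by continuity : Continuous fun ξ : ℝ => r * (1 + ξ) ^ 2).continuousOn
          (fun x hx => by have := mem_Ioi.1 hx; positivity)
  -- integrability of f
  have hfi : IntegrableOn f (Ioi 0) := by
    rw [← Ioc_union_Ioi_eq_Ioi (zero_le_one (α := ℝ))]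
    apply IntegrableOn.union
    · apply Integrable.mono' (stmt17_integrable_inv_sqrt.const_mul 2)
        ((hfc.mono Ioc_subset_Ioi_self).aestronglyMeasurable measurableSet_Ioc)
      refine (ae_restrict_iff' measurableSet_Ioc).2 (Eventually.of_forall fun x hx => ?_)
      obtain ⟨hx0, hx1⟩ := hx
      have hxx : 0 < x * (x + 2) := by nlinarith
      have hS : 0 < Real.sqrt (x * (x + 2)) := Real.sqrt_pos.2 hxx
      have hSx : Real.sqrt x ≤ Real.sqrt (x * (x + 2)) := Real.sqrt_le_sqrt (by nlinarith)
      have hsx : 0 < Real.sqrt x := Real.sqrt_pos.2 hx0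
      have hEu : |r - t + r * x| * Real.exp (-(r - t + r * x) ^ 2 / 2) ≤ 1 :=
        stmt17_abs_mul_exp_le_one _
      have hrx : x ^ (-(1/2) : ℝ) = (Real.sqrt x)⁻¹ := by
        rw [Real.rpow_neg hx0.le, Real.sqrt_eq_rpow]
      have habs : ‖f x‖ = Real.exp (-(r - t + r * x) ^ 2 / 2) * |r - t + r * x| * (1 + x) /
          Real.sqrt (x * (x + 2)) := by
        simp only [hfdef, Real.norm_eq_abs, abs_mul, abs_div,
          abs_of_pos (Real.exp_pos _), abs_of_pos hS, abs_of_pos (show (0:ℝ) < 1 + x by linarith)]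
        ring
      rw [habs, hrx]
      have h1 : Real.exp (-(r - t + r * x) ^ 2 / 2) * |r - t + r * x| * (1 + x) ≤ 2 := by
        nlinarith [Real.exp_pos (-(r - t + r * x) ^ 2 / 2), abs_nonneg (r - t + r * x)]
      calc Real.exp (-(r - t + r * x) ^ 2 / 2) * |r - t + r * x| * (1 + x) /
            Real.sqrt (x * (x + 2)) ≤ 2 / Real.sqrt x := div_le_div₀ (by norm_num) h1 hsx hSx
        _ = 2 * (Real.sqrt x)⁻¹ := by ring
    · apply Integrable.mono'
        (((stmt17_integrable_gauss r (r - t) hr.ne').const_mul 2).integrableOn)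
        ((hfc.mono (Ioi_subset_Ioi zero_le_one)).aestronglyMeasurable measurableSet_Ioi)
      refine (ae_restrict_iff' measurableSet_Ioi).2 (Eventually.of_forall fun x hx => ?_)
      have hx1 : (1:ℝ) < x := hx
      have hxx : 0 < x * (x + 2) := by nlinarith
      have hS : 0 < Real.sqrt (x * (x + 2)) := Real.sqrt_pos.2 hxx
      have hS2 : Real.sqrt (x * (x + 2)) ^ 2 = x * (x + 2) := Real.sq_sqrt hxx.le
      have hPS : 1 + x ≤ 2 * Real.sqrt (x * (x + 2)) := by nlinarith
      have hEu : |r - t + r * x| * Real.exp (-(r - t + r * x) ^ 2 / 2) ≤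
          Real.exp (-(r - t + r * x) ^ 2 / 4) := stmt17_abs_mul_exp_le _
      have habs : ‖f x‖ = Real.exp (-(r - t + r * x) ^ 2 / 2) * |r - t + r * x| * (1 + x) /
          Real.sqrt (x * (x + 2)) := by
        simp only [hfdef, Real.norm_eq_abs, abs_mul, abs_div,
          abs_of_pos (Real.exp_pos _), abs_of_pos hS, abs_of_pos (show (0:ℝ) < 1 + x by linarith)]
        ring
      rw [habs]
      rw [div_le_iff₀ hS]
      have he4 : (0:ℝ) ≤ Real.exp (-(r - t + r * x) ^ 2 / 4) := (Real.exp_pos _).le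
      have habs0 : (0:ℝ) ≤ |r - t + r * x| * Real.exp (-(r - t + r * x) ^ 2 / 2) := by positivity
      calc Real.exp (-(r - t + r * x) ^ 2 / 2) * |r - t + r * x| * (1 + x)
          ≤ Real.exp (-(r - t + r * x) ^ 2 / 4) * (2 * Real.sqrt (x * (x + 2))) := by
            nlinarith [mul_le_mul_of_nonneg_right hEu (show (0:ℝ) ≤ 1 + x by linarith)]
        _ = 2 * Real.exp (-(r - t + r * x) ^ 2 / 4) * Real.sqrt (x * (x + 2)) := by ring
  -- integrability of g
  have hgi : IntegrableOn g (Ioi 0) := by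
    rw [← Ioc_union_Ioi_eq_Ioi (zero_le_one (α := ℝ))]
    apply IntegrableOn.union
    · apply Integrable.mono' (stmt17_integrable_inv_sqrt.const_mul (1 + 1/r))
        ((hgc.mono Ioc_subset_Ioi_self).aestronglyMeasurable measurableSet_Ioc)
      refine (ae_restrict_iff' measurableSet_Ioc).2 (Eventually.of_forall fun x hx => ?_)
      obtain ⟨hx0, hx1⟩ := hx
      have hxx : 0 < x * (x + 2) := by nlinarith
      have hS : 0 < Real.sqrt (x * (x + 2)) := Real.sqrt_pos.2 hxx
      have hSx : Real.sqrt x ≤ Real.sqrt (x * (x + 2)) := Real.sqrt_le_sqrt (by nlinarith)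
      have hsx : 0 < Real.sqrt x := Real.sqrt_pos.2 hx0
      have hP : (0:ℝ) < 1 + x := by linarith
      have hrx : x ^ (-(1/2) : ℝ) = (Real.sqrt x)⁻¹ := by
        rw [Real.rpow_neg hx0.le, Real.sqrt_eq_rpow]
      have hEu : |r * (1 + x) - t| * Real.exp (-(r - t + r * x) ^ 2 / 2) ≤ 1 := by
        have : r * (1 + x) - t = r - t + r * x := by ring
        rw [this]; exact stmt17_abs_mul_exp_le_one _
      have hE1 : Real.exp (-(r - t + r * x) ^ 2 / 2) ≤ 1 := by
        rw [show (1:ℝ) = Real.exp 0 from Real.exp_zero.symm]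
        exact Real.exp_le_exp.2 (by nlinarith [sq_nonneg (r - t + r * x)])
      have habs : ‖g x‖ ≤ Real.exp (-(r - t + r * x) ^ 2 / 2) *
          (|r * (1 + x) - t| / (1 + x) + 1 / (r * (1 + x) ^ 2)) / Real.sqrt (x * (x + 2)) := by
        simp only [hgdef, Real.norm_eq_abs, abs_mul, abs_div, abs_of_pos (Real.exp_pos _),
          abs_of_pos hS]
        rw [div_mul_eq_mul_div, div_le_div_iff_of_pos_right hS, mul_le_mul_iff_right₀ (Real.exp_pos _)]
        refine (abs_add_le _ _).trans ?_
        rw [abs_div, abs_of_pos hP, abs_div, abs_of_pos (show (0:ℝ) < r * (1 + x) ^ 2 by positivity),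
          abs_one]
      rw [hrx]
      refine habs.trans ?_
      have h1 : Real.exp (-(r - t + r * x) ^ 2 / 2) *
          (|r * (1 + x) - t| / (1 + x) + 1 / (r * (1 + x) ^ 2)) ≤ 1 + 1 / r := by
        have e1 : Real.exp (-(r - t + r * x) ^ 2 / 2) * (|r * (1 + x) - t| / (1 + x)) ≤ 1 := by
          rw [mul_div_assoc']
          rw [div_le_one hP]
          nlinarith [abs_nonneg (r * (1 + x) - t), Real.exp_pos (-(r - t + r * x) ^ 2 / 2)]
        have e2 : Real.exp (-(r - t + r * x) ^ 2 / 2) * (1 / (r * (1 + x) ^ 2)) ≤ 1 / r := by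
          have : 1 / (r * (1 + x) ^ 2) ≤ 1 / r := by
            apply div_le_div_of_nonneg_left zero_le_one hr
            nlinarith
          nlinarith [Real.exp_pos (-(r - t + r * x) ^ 2 / 2),
            show (0:ℝ) < 1 / (r * (1 + x) ^ 2) by positivity]
        nlinarith
      calc Real.exp (-(r - t + r * x) ^ 2 / 2) *
            (|r * (1 + x) - t| / (1 + x) + 1 / (r * (1 + x) ^ 2)) / Real.sqrt (x * (x + 2))
          ≤ (1 + 1/r) / Real.sqrt x := by
            apply div_le_div₀ (by positivity) h1 hsx hSx
        _ = (1 + 1/r) * (Real.sqrt x)⁻¹ := by ring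
    · apply Integrable.mono'
        (((stmt17_integrable_gauss r (r - t) hr.ne').const_mul (1 + 1/r)).integrableOn)
        ((hgc.mono (Ioi_subset_Ioi zero_le_one)).aestronglyMeasurable measurableSet_Ioi)
      refine (ae_restrict_iff' measurableSet_Ioi).2 (Eventually.of_forall fun x hx => ?_)
      have hx1 : (1:ℝ) < x := hx
      have hxx : 0 < x * (x + 2) := by nlinarith
      have hS : 0 < Real.sqrt (x * (x + 2)) := Real.sqrt_pos.2 hxx
      have hS2 : Real.sqrt (x * (x + 2)) ^ 2 = x * (x + 2) := Real.sq_sqrt hxx.le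
      have hS1 : (1:ℝ) ≤ Real.sqrt (x * (x + 2)) := by nlinarith
      have hP : (0:ℝ) < 1 + x := by linarith
      have hEu : |r * (1 + x) - t| * Real.exp (-(r - t + r * x) ^ 2 / 2) ≤
          Real.exp (-(r - t + r * x) ^ 2 / 4) := by
        have : r * (1 + x) - t = r - t + r * x := by ring
        rw [this]; exact stmt17_abs_mul_exp_le _
      have hE4 : Real.exp (-(r - t + r * x) ^ 2 / 2) ≤ Real.exp (-(r - t + r * x) ^ 2 / 4) :=
        Real.exp_le_exp.2 (by nlinarith [sq_nonneg (r - t + r * x)])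
      have habs : ‖g x‖ ≤ Real.exp (-(r - t + r * x) ^ 2 / 2) *
          (|r * (1 + x) - t| / (1 + x) + 1 / (r * (1 + x) ^ 2)) / Real.sqrt (x * (x + 2)) := by
        simp only [hgdef, Real.norm_eq_abs, abs_mul, abs_div, abs_of_pos (Real.exp_pos _),
          abs_of_pos hS]
        rw [div_mul_eq_mul_div, div_le_div_iff_of_pos_right hS, mul_le_mul_iff_right₀ (Real.exp_pos _)]
        refine (abs_add_le _ _).trans ?_
        rw [abs_div, abs_of_pos hP, abs_div, abs_of_pos (show (0:ℝ) < r * (1 + x) ^ 2 by positivity),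
          abs_one]
      refine habs.trans ?_
      rw [div_le_iff₀ hS]
      have e1 : |r * (1 + x) - t| / (1 + x) ≤ |r * (1 + x) - t| := by
        apply div_le_self (abs_nonneg _); linarith
      have e2 : 1 / (r * (1 + x) ^ 2) ≤ 1 / r := by
        apply div_le_div_of_nonneg_left zero_le_one hr; nlinarith
      have he4 : (0:ℝ) < Real.exp (-(r - t + r * x) ^ 2 / 4) := Real.exp_pos _
      have he2 : (0:ℝ) < Real.exp (-(r - t + r * x) ^ 2 / 2) := Real.exp_pos _
      have key : Real.exp (-(r - t + r * x) ^ 2 / 2) *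
          (|r * (1 + x) - t| / (1 + x) + 1 / (r * (1 + x) ^ 2)) ≤
          (1 + 1/r) * Real.exp (-(r - t + r * x) ^ 2 / 4) := by
        have b1 : Real.exp (-(r - t + r * x) ^ 2 / 2) * (|r * (1 + x) - t| / (1 + x)) ≤
            Real.exp (-(r - t + r * x) ^ 2 / 4) := by
          calc Real.exp (-(r - t + r * x) ^ 2 / 2) * (|r * (1 + x) - t| / (1 + x))
              ≤ Real.exp (-(r - t + r * x) ^ 2 / 2) * |r * (1 + x) - t| :=
                mul_le_mul_of_nonneg_left e1 he2.le
            _ ≤ Real.exp (-(r - t + r * x) ^ 2 / 4) := by rw [mul_comm]; exact hEu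
        have b2 : Real.exp (-(r - t + r * x) ^ 2 / 2) * (1 / (r * (1 + x) ^ 2)) ≤
            (1/r) * Real.exp (-(r - t + r * x) ^ 2 / 4) := by
          calc Real.exp (-(r - t + r * x) ^ 2 / 2) * (1 / (r * (1 + x) ^ 2))
              ≤ Real.exp (-(r - t + r * x) ^ 2 / 4) * (1/r) := by
                apply mul_le_mul hE4 e2 (by positivity) he4.le
            _ = (1/r) * Real.exp (-(r - t + r * x) ^ 2 / 4) := by ring
        nlinarith
      calc Real.exp (-(r - t + r * x) ^ 2 / 2) *
            (|r * (1 + x) - t| / (1 + x) + 1 / (r * (1 + x) ^ 2))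
          ≤ (1 + 1/r) * Real.exp (-(r - t + r * x) ^ 2 / 4) := key
        _ ≤ (1 + 1/r) * Real.exp (-(r - t + r * x) ^ 2 / 4) * Real.sqrt (x * (x + 2)) := by
            nlinarith [mul_pos (show (0:ℝ) < 1 + 1/r by positivity) he4]
  -- derivative of F
  have hderiv : ∀ ξ ∈ Ioi (0:ℝ), HasDerivAt F (r * (g ξ - f ξ)) ξ := by
    intro ξ hξ
    have hξ0 : (0:ℝ) < ξ := hξ
    have hx : 0 < ξ * (ξ + 2) := by nlinarith
    have hSpos : 0 < Real.sqrt (ξ * (ξ + 2)) := Real.sqrt_pos.2 hx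
    have hP : (0:ℝ) < 1 + ξ := by linarith
    have h1 : HasDerivAt (fun x : ℝ => r - t + r * x) r ξ := by
      simpa using ((hasDerivAt_id ξ).const_mul r).const_add (r - t)
    have h2 : HasDerivAt (fun x : ℝ => -(r - t + r * x) ^ 2 / 2) (-((r - t + r * ξ) * r)) ξ := by
      have := ((h1.pow 2).neg).div_const 2
      exact this.congr_deriv (by simp; ring)
    have h3 := h2.exp
    have h4 : HasDerivAt (fun x : ℝ => x * (x + 2)) (2 * ξ + 2) ξ := by
      have := (hasDerivAt_id ξ).mul ((hasDerivAt_id ξ).add_const 2)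
      exact this.congr_deriv (by simp; ring)
    have h5 := h4.sqrt hx.ne'
    have h6 : HasDerivAt (fun x : ℝ => 1 + x) 1 ξ := by
      simpa using (hasDerivAt_id ξ).const_add 1
    have h7 := (h3.mul h5).div h6 hP.ne'
    rw [hFdef]
    refine h7.congr_deriv (Eq.symm ?_)
    simp only [hgdef, hfdef, Pi.mul_apply]
    have hS2 : Real.sqrt (ξ * (ξ + 2)) ^ 2 = ξ * (ξ + 2) := Real.sq_sqrt hx.le
    set S := Real.sqrt (ξ * (ξ + 2)) with hSdef
    set E := Real.exp (-(r - t + r * ξ) ^ 2 / 2) with hEdef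
    field_simp
    ring_nf
    linear_combination (S^2 * 2*E*(1+ξ)^3*(r - r^2*t*(1+ξ) + r^3*(1+ξ)^2)
      + (-6*E*r*ξ*S^2 - 6*E*r*ξ^2*S^2 - 2*E*r*ξ^3*S^2 - 2*E*r*S^2 + 8*E*r^2*ξ*t*S^2 + 12*E*r^2*ξ^2*t*S^2 + 8*E*r^2*ξ^3*t*S^2 + 2*E*r^2*ξ^4*t*S^2 + 2*E*r^2*t*S^2 - 10*E*r^3*ξ*S^2 - 20*E*r^3*ξ^2*S^2 - 20*E*r^3*ξ^3*S^2 - 10*E*r^3*ξ^4*S^2 - 2*E*r^3*ξ^5*S^2 - 2*E*r^3*S^2 - E*r*ξ*t - E*r*t + 2*E*r^2*ξ + E*r^2*ξ^2 + E*r^2 + E)) * hS2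
  -- limit of F at infinity
  have htop : Tendsto F atTop (𝓝 0) := by
    have hu_top : Tendsto (fun ξ : ℝ => r - t + r * ξ) atTop atTop :=
      tendsto_atTop_add_const_left _ _ (tendsto_id.const_mul_atTop hr)
    have hsq_top : Tendsto (fun ξ : ℝ => (r - t + r * ξ) ^ 2) atTop atTop :=
      (tendsto_pow_atTop two_ne_zero).comp hu_top
    have hbot : Tendsto (fun ξ : ℝ => -(r - t + r * ξ) ^ 2 / 2) atTop atBot := by
      have h := (hsq_top.atTop_div_const (show (0:ℝ) < 2 by norm_num))
      have := tendsto_neg_atBot_iff.2 h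
      refine this.congr fun x => by ring
    have hE0 : Tendsto (fun ξ : ℝ => Real.exp (-(r - t + r * ξ) ^ 2 / 2)) atTop (𝓝 0) :=
      Real.tendsto_exp_atBot.comp hbot
    apply squeeze_zero_norm' (a := fun ξ : ℝ => Real.exp (-(r - t + r * ξ) ^ 2 / 2)) _ hE0
    filter_upwards [eventually_ge_atTop (0:ℝ)] with x hx0
    have hP : (0:ℝ) < 1 + x := by linarith
    have hSle : Real.sqrt (x * (x + 2)) ≤ 1 + x := by
      have h := Real.sqrt_le_sqrt (show x * (x + 2) ≤ (1 + x) * (1 + x) by nlinarith)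
      rwa [Real.sqrt_mul_self hP.le] at h
    have hSnn : 0 ≤ Real.sqrt (x * (x + 2)) := Real.sqrt_nonneg _
    have hFx : F x = Real.exp (-(r - t + r * x) ^ 2 / 2) * Real.sqrt (x * (x + 2)) / (1 + x) := rfl
    rw [Real.norm_eq_abs, hFx, abs_of_nonneg (by positivity)]
    rw [div_le_iff₀ hP]
    nlinarith [Real.exp_pos (-(r - t + r * x) ^ 2 / 2)]
  -- continuity of F at 0 from the right
  have hF0cont : ContinuousWithinAt F (Ici 0) 0 := by
    apply ContinuousAt.continuousWithinAt
    apply ContinuousAt.div ((hexp.mul hsq).continuousAt)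
      (by continuity : Continuous fun ξ : ℝ => 1 + ξ).continuousAt
    norm_num
  have hF0 : F 0 = 0 := by
    simp [hFdef]
  -- integrability of the derivative
  have hDi : IntegrableOn (fun ξ => r * (g ξ - f ξ)) (Ioi 0) := (hgi.sub hfi).const_mul r
  -- FTC
  have hint : ∫ ξ in Ioi (0:ℝ), r * (g ξ - f ξ) = 0 - F 0 :=
    integral_Ioi_of_hasDerivAt_of_tendsto hF0cont hderiv hDi htop
  rw [hF0, sub_zero] at hint
  rw [MeasureTheory.integral_const_mul, integral_sub hgi hfi] at hint
  have := mul_eq_zero.1 hint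
  rcases this with h | h
  · exact absurd h hr.ne'
  · linarith [sub_eq_zero.1 h]
end

section
/- Let j ≥ 0 be an integer, let t ≥ 0 and r ≥ 0 be real, and let ζ ∈ ℂ. Then |exp(−(r − tζ)²/2) · Ĩⱼ(rtζ)| ≤ exp((t · Im ζ)² / 2). -/
open MeasureTheory

/-- Modified Bessel function of the first kind of integer order `j`, for complex argument:
`Iⱼ(z) = (1/π)∫₀^π e^{z cos φ} cos(jφ) dφ`. -/
noncomputable def besselIC (j : ℕ) (z : ℂ) : ℂ :=
  (1 / (Real.pi : ℂ)) * ∫ φ in (0 : ℝ)..Real.pi,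
    Complex.exp (z * (Real.cos φ : ℂ)) * (Real.cos (j * φ) : ℂ)

/-- `Ĩⱼ(z) = e^{−z} Iⱼ(z)`. -/
noncomputable def ItildeC (j : ℕ) (z : ℂ) : ℂ := Complex.exp (-z) * besselIC j z

lemma besselIC_norm_le (j : ℕ) (z : ℂ) : ‖besselIC j z‖ ≤ Real.exp |z.re| := by
  have hπ := Real.pi_pos
  have h1 : ‖∫ φ in (0:ℝ)..Real.pi, Complex.exp (z * (Real.cos φ : ℂ)) * (Real.cos (j * φ) : ℂ)‖
      ≤ Real.exp |z.re| * |Real.pi - 0| := by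
    apply intervalIntegral.norm_integral_le_of_norm_le_const
    intro x _
    rw [norm_mul]
    have h2 : ‖Complex.exp (z * (Real.cos x : ℂ))‖ ≤ Real.exp |z.re| := by
      rw [Complex.norm_exp]
      apply Real.exp_le_exp.2
      have hre : (z * (Real.cos x : ℂ)).re = z.re * Real.cos x := by
        rw [Complex.mul_re, Complex.ofReal_re, Complex.ofReal_im]; ring
      rw [hre]
      calc z.re * Real.cos x ≤ |z.re * Real.cos x| := le_abs_self _
        _ = |z.re| * |Real.cos x| := abs_mul _ _
        _ ≤ |z.re| * 1 := mul_le_mul_of_nonneg_left (Real.abs_cos_le_one x) (abs_nonneg _)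
        _ = |z.re| := mul_one _
    have h3 : ‖((Real.cos (j * x) : ℝ) : ℂ)‖ ≤ 1 := by
      rw [Complex.norm_real, Real.norm_eq_abs]; exact Real.abs_cos_le_one _
    calc ‖Complex.exp (z * (Real.cos x : ℂ))‖ * ‖((Real.cos (j * x) : ℝ) : ℂ)‖
        ≤ Real.exp |z.re| * 1 := mul_le_mul h2 h3 (norm_nonneg _) (Real.exp_pos _).le
      _ = Real.exp |z.re| := mul_one _
  rw [besselIC, norm_mul]
  have hn : ‖(1 / (Real.pi : ℂ))‖ = 1 / Real.pi := by
    rw [norm_div, norm_one, Complex.norm_real, Real.norm_eq_abs, abs_of_pos hπ]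
  rw [hn]
  rw [sub_zero, abs_of_pos hπ] at h1
  calc 1/Real.pi * ‖∫ φ in (0:ℝ)..Real.pi,
          Complex.exp (z * (Real.cos φ : ℂ)) * (Real.cos (j * φ) : ℂ)‖
      ≤ 1/Real.pi * (Real.exp |z.re| * Real.pi) :=
        mul_le_mul_of_nonneg_left h1 (by positivity)
    _ = Real.exp |z.re| := by field_simp

lemma ItildeC_norm_le (j : ℕ) (z : ℂ) : ‖ItildeC j z‖ ≤ Real.exp (|z.re| - z.re) := by
  rw [ItildeC, norm_mul, Complex.norm_exp]
  have : Real.exp (|z.re| - z.re) = Real.exp ((-z).re) * Real.exp |z.re| := by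
    rw [← Real.exp_add, Complex.neg_re]; ring_nf
  rw [this]
  exact mul_le_mul_of_nonneg_left (besselIC_norm_le j z) (Real.exp_pos _).le

set_option maxHeartbeats 1000000 in
theorem stmt_19 (j : ℕ) (t r : ℝ) (ht : 0 ≤ t) (hr : 0 ≤ r) (ζ : ℂ) :
    ‖Complex.exp (-((r : ℂ) - (t : ℂ) * ζ) ^ 2 / 2) * ItildeC j ((r : ℂ) * (t : ℂ) * ζ)‖ ≤
      Real.exp ((t * ζ.im) ^ 2 / 2) := by
  rw [norm_mul, Complex.norm_exp]
  have hre : (-((r : ℂ) - (t : ℂ) * ζ) ^ 2 / 2).re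
      = -((r - t * ζ.re) ^ 2 - (t * ζ.im) ^ 2) / 2 := by
    rw [Complex.div_ofNat_re]
    simp [pow_two, Complex.mul_re, Complex.sub_re, Complex.sub_im, Complex.mul_im]
  have hzre : (((r : ℂ) * (t : ℂ) * ζ)).re = r * t * ζ.re := by simp
  have hb := ItildeC_norm_le j ((r : ℂ) * (t : ℂ) * ζ)
  rw [hzre] at hb
  rw [hre]
  have step := mul_le_mul_of_nonneg_left hb (Real.exp_pos (-((r - t * ζ.re) ^ 2 - (t * ζ.im) ^ 2) / 2)).le
  refine le_trans step ?_
  rw [← Real.exp_add]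
  apply Real.exp_le_exp.2
  rcases abs_cases (r * t * ζ.re) with ⟨h, _⟩ | ⟨h, _⟩ <;> rw [h] <;>
    nlinarith [sq_nonneg (r + t * ζ.re), sq_nonneg (r - t * ζ.re), mul_nonneg hr ht]
end
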